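/- Let M be an L-structure. Suppose that for each partitioned L-formula φ(x; ȳ) (with x a single variable) there exists K_φ < ω such that for every finite collection {φ_i(x; b̄_i) : i < n} of partitioned L-formulas φ_i(x; ȳ_i) with parameters b̄_i from M, there exists a linear order < on M such that for each i < n, the set φ_i(M; b̄_i) is a union of at most K_{φ_i} <-convex subsets of M. Then M is convexly orderable. -/

import Mathlib

open FirstOrder Language

/-- `S` is convex with respect to the strict order `r`. -/
def IsRConvex {X : Type*} (r : X → X → Prop) (S : Set X) : Prop :=
  ∀ a b c : X, r a b → r b c → a ∈ S → c ∈ S → b ∈ S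

/-- `S` is a union of at most `K` `r`-convex subsets of `X`. -/
def UnionOfAtMostConvex {X : Type*} (r : X → X → Prop) (K : ℕ) (S : Set X) : Prop :=
  ∃ C : Fin K → Set X, (∀ i, IsRConvex r (C i)) ∧ S = ⋃ i, C i

/-- `φ(M; b̄)`, the set defined in `M` by the partitioned formula `φ(x; ȳ)` with
parameters `b̄`. -/
def realizeSet (L : Language) (M : Type*) [L.Structure M] {m : ℕ}
    (φ : L.Formula (Unit ⊕ Fin m)) (b : Fin m → M) : Set M :=
  {a : M | φ.Realize (Sum.elim (fun _ => a) b)}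

/-- An `L`-structure `M` is convexly orderable if there is a linear order on `M` such
that every partitioned formula `φ(x; ȳ)` admits a uniform finite bound `K` such that
each `φ(M; b̄)` is a union of at most `K` convex sets. -/
def ConvexlyOrderable (L : Language) (M : Type*) [L.Structure M] : Prop :=
  ∃ r : M → M → Prop, IsStrictTotalOrder M r ∧
    ∀ (m : ℕ) (φ : L.Formula (Unit ⊕ Fin m)), ∃ K : ℕ,
      ∀ b : Fin m → M, UnionOfAtMostConvex r K (realizeSet L M φ b)


def HasAlt {X : Type*} (r : X → X → Prop) (S : Set X) (N : ℕ) : Prop :=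
  ∃ a : Fin N → X, (∀ i j : Fin N, i < j → r (a i) (a j)) ∧
    ∀ i : Fin N, (a i ∈ S ↔ Even (i : ℕ))

lemma not_hasAlt_of_union {X : Type*} {r : X → X → Prop} {Kn : ℕ} {S : Set X}
    (h : UnionOfAtMostConvex r Kn S) : ¬ HasAlt r S (2 * Kn + 1) := by
  rintro ⟨a, hchain, hpat⟩
  obtain ⟨C, hconv, hS⟩ := h
  have mem : ∀ j : Fin (Kn + 1), ∃ t : Fin Kn, a ⟨2 * j, by omega⟩ ∈ C t := by
    intro j
    have : a ⟨2 * j, by omega⟩ ∈ S := (hpat _).mpr (by simp only [Fin.val_mk, Nat.even_iff]; omega)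
    rw [hS] at this
    simpa using this
  choose f hf using mem
  have hni : ¬ Function.Injective f := by
    intro hinj
    simpa using Fintype.card_le_of_injective f hinj
  rw [Function.not_injective_iff] at hni
  obtain ⟨j, j', hfe, hne⟩ := hni
  have key : ∀ j j' : Fin (Kn + 1), f j = f j' → j < j' → False := by
    intro j j' hfe hlt
    rw [Fin.lt_def] at hlt
    set mid : Fin (2 * Kn + 1) := ⟨2 * j + 1, by omega⟩ with hmid
    have h1 : r (a ⟨2 * j, by omega⟩) (a mid) := hchain _ _ (by rw [Fin.lt_def]; simp [hmid])
    have h2 : r (a mid) (a ⟨2 * j', by omega⟩) := hchain _ _ (by rw [Fin.lt_def]; simp [hmid]; omega)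
    have hmem : a mid ∈ C (f j) := hconv (f j) _ _ _ h1 h2 (hf j) (hfe ▸ hf j')
    have hmS : a mid ∈ S := by rw [hS]; exact Set.mem_iUnion.2 ⟨f j, hmem⟩
    have := (hpat mid).mp hmS
    rw [hmid] at this
    simp [Nat.even_iff] at this
  rcases Ne.lt_or_gt hne with hlt | hlt
  · exact key _ _ hfe hlt
  · exact key _ _ hfe.symm hlt

open Set in
lemma union_of_not_hasAlt {X : Type*} [LinearOrder X] {Kn : ℕ} {S : Set X}
    (h : ¬ HasAlt (· < ·) S (2 * Kn + 1)) : UnionOfAtMostConvex (· < ·) Kn S := by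
  classical
  rcases eq_empty_or_nonempty S with hS | ⟨s0, hs0⟩
  · exact ⟨fun _ => ∅, fun i a b c _ _ hb => hb.elim, by simp [hS]⟩
  by_cases hcov : ∃ f : Fin Kn → X, ∀ b ∈ S, ∃ i, Set.uIcc (f i) b ⊆ S
  · obtain ⟨f, hf⟩ := hcov
    refine ⟨fun i => {b | Set.uIcc (f i) b ⊆ S}, ?_, ?_⟩
    · intro i x y z hxy hyz hx hz
      have hxS : x ∈ S := hx (right_mem_uIcc)
      have hxz : Set.uIcc x z ⊆ S := by
        intro d hd
        rcases uIcc_subset_uIcc_union_uIcc (b := f i) hd with hd | hd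
        · exact hx (uIcc_comm x (f i) ▸ hd)
        · exact hz hd
      intro d hd
      rcases uIcc_subset_uIcc_union_uIcc (b := x) hd with hd | hd
      · exact hx (uIcc_comm (f i) x ▸ hd)
      · refine hxz (uIcc_subset_uIcc left_mem_uIcc ?_ hd)
        exact mem_uIcc.2 (Or.inl ⟨le_of_lt hxy, le_of_lt hyz⟩)
    · ext b
      simp only [mem_iUnion, mem_setOf_eq]
      constructor
      · intro hb; exact hf b hb
      · rintro ⟨i, hi⟩; exact hi right_mem_uIcc
  · push_neg at hcov
    -- greedy construction of Kn+1 pairwise inequivalent elements of S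
    have claim : ∀ n : ℕ, n ≤ Kn + 1 →
        ∃ g : Fin n → X, (∀ i, g i ∈ S) ∧
          ∀ i j, i ≠ j → ¬ Set.uIcc (g i) (g j) ⊆ S := by
      intro n
      induction n with
      | zero => exact fun _ => ⟨Fin.elim0, fun i => i.elim0, fun i => i.elim0⟩
      | succ n ih =>
        intro hn
        obtain ⟨g, hgS, hgE⟩ := ih (by omega)
        obtain ⟨b, hbS, hb⟩ := hcov (fun i => if hi : (i : ℕ) < n then g ⟨i, hi⟩ else s0)
        have hb' : ∀ j : Fin n, ¬ Set.uIcc (g j) b ⊆ S := by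
          intro j
          have := hb ⟨j, by omega⟩
          simpa [j.2] using this
        refine ⟨Fin.snoc g b, ?_, ?_⟩
        · intro i
          rcases Fin.eq_castSucc_or_eq_last i with ⟨j, rfl⟩ | rfl
          · simpa [Fin.snoc_castSucc] using hgS j
          · simpa [Fin.snoc_last] using hbS
        · intro i j hne
          rcases Fin.eq_castSucc_or_eq_last i with ⟨i', rfl⟩ | rfl
          · rcases Fin.eq_castSucc_or_eq_last j with ⟨j', rfl⟩ | rfl
            · simp only [Fin.snoc_castSucc]
              exact hgE i' j' (by simpa [Fin.castSucc_inj] using hne)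
            · simp only [Fin.snoc_last, Fin.snoc_castSucc]
              exact hb' i'
          · rcases Fin.eq_castSucc_or_eq_last j with ⟨j', rfl⟩ | rfl
            · simp only [Fin.snoc_last, Fin.snoc_castSucc]
              rw [Set.uIcc_comm]
              exact hb' j'
            · exact absurd rfl hne
    obtain ⟨g, hgS, hgE⟩ := claim (Kn + 1) le_rfl
    exfalso
    apply h
    -- g is injective
    have ginj : Function.Injective g := by
      intro i j hij
      by_contra hne
      exact hgE i j hne (by rw [hij, Set.uIcc_self, Set.singleton_subset_iff]; exact hgS j)
    -- sort
    set t : Finset X := Finset.univ.image g with ht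
    have htc : t.card = Kn + 1 := by
      rw [ht, Finset.card_image_of_injective _ ginj, Finset.card_univ, Fintype.card_fin]
    let e := t.orderIsoOfFin htc
    set x : Fin (Kn + 1) → X := fun i => (e i : X) with hx
    have hxmono : StrictMono x := fun i j hij => by
      exact_mod_cast e.strictMono hij
    have hxS : ∀ i, x i ∈ S := by
      intro i
      have : x i ∈ t := (e i).2
      rw [ht, Finset.mem_image] at this
      obtain ⟨j, -, hj⟩ := this
      exact hj ▸ hgS j
    have hxE : ∀ i j : Fin (Kn + 1), i ≠ j → ¬ Set.uIcc (x i) (x j) ⊆ S := by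
      intro i j hne hsub
      have hxi : x i ∈ t := (e i).2
      have hxj : x j ∈ t := (e j).2
      rw [ht, Finset.mem_image] at hxi hxj
      obtain ⟨i', -, hi'⟩ := hxi
      obtain ⟨j', -, hj'⟩ := hxj
      have : i' ≠ j' := by
        rintro rfl
        rw [hi'] at hj'
        exact hne (e.injective (Subtype.ext hj'))
      exact hgE i' j' this (by rw [hi', hj']; exact hsub)
    -- pick witnesses between consecutive
    have hmid : ∀ i : Fin Kn, ∃ c, x i.castSucc < c ∧ c < x i.succ ∧ c ∉ S := by
      intro i
      have hne : (i.castSucc : Fin (Kn + 1)) ≠ i.succ := by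
        simp [Fin.ext_iff]
      obtain ⟨c, hcmem, hcS⟩ := Set.not_subset.1 (hxE _ _ hne)
      have hlt : x i.castSucc < x i.succ := hxmono Fin.castSucc_lt_succ
      rw [Set.uIcc_of_le hlt.le, Set.mem_Icc] at hcmem
      have h1 : x i.castSucc < c := lt_of_le_of_ne hcmem.1 (by rintro rfl; exact hcS (hxS _))
      have h2 : c < x i.succ := lt_of_le_of_ne hcmem.2 (by rintro rfl; exact hcS (hxS _))
      exact ⟨c, h1, h2, hcS⟩
    choose c hc1 hc2 hc3 using hmid
    refine ⟨fun k => if hk : (k : ℕ) % 2 = 0 then x ⟨k / 2, by omega⟩ else c ⟨k / 2, by omega⟩,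
      ?_, ?_⟩
    · have hmono : StrictMono (fun k : Fin (2 * Kn + 1) =>
          if hk : (k : ℕ) % 2 = 0 then x ⟨k / 2, by omega⟩ else c ⟨k / 2, by omega⟩) := by
        rw [Fin.strictMono_iff_lt_succ]
        intro i
        rcases Nat.even_or_odd (i : ℕ) with he | ho
        · have h1 : ((i.castSucc : Fin (2 * Kn + 1)) : ℕ) % 2 = 0 := by
            simp [Nat.even_iff] at he ⊢; omega
          have h2 : ¬ ((i.succ : Fin (2 * Kn + 1)) : ℕ) % 2 = 0 := by
            simp [Nat.even_iff] at he ⊢; omega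
          rw [dif_pos h1, dif_neg h2]
          have hidx : (⟨((i.succ : Fin (2 * Kn + 1)) : ℕ) / 2, by omega⟩ : Fin Kn)
              = ⟨(i : ℕ) / 2, by omega⟩ := by
            simp [Fin.ext_iff, Nat.even_iff] at he ⊢; omega
          have hidx2 : (⟨((i.castSucc : Fin (2 * Kn + 1)) : ℕ) / 2, by omega⟩ : Fin (Kn + 1))
              = (⟨(i : ℕ) / 2, by omega⟩ : Fin Kn).castSucc := by
            simp [Fin.ext_iff]
          rw [hidx, hidx2]
          exact hc1 _
        · have h1 : ¬ ((i.castSucc : Fin (2 * Kn + 1)) : ℕ) % 2 = 0 := by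
            simp [Nat.odd_iff] at ho ⊢; omega
          have h2 : ((i.succ : Fin (2 * Kn + 1)) : ℕ) % 2 = 0 := by
            simp [Nat.odd_iff] at ho ⊢; omega
          rw [dif_neg h1, dif_pos h2]
          have hidx : (⟨((i.castSucc : Fin (2 * Kn + 1)) : ℕ) / 2, by omega⟩ : Fin Kn)
              = ⟨(i : ℕ) / 2, by omega⟩ := by
            simp [Fin.ext_iff]
          have hidx2 : (⟨((i.succ : Fin (2 * Kn + 1)) : ℕ) / 2, by omega⟩ : Fin (Kn + 1))
              = (⟨(i : ℕ) / 2, by omega⟩ : Fin Kn).succ := by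
            simp [Fin.ext_iff, Nat.odd_iff] at ho ⊢; omega
          rw [hidx, hidx2]
          exact hc2 _
      exact fun i j hij => hmono hij
    · intro k
      beta_reduce
      rcases Nat.even_or_odd (k : ℕ) with he | ho
      · rw [dif_pos (Nat.even_iff.1 he)]
        simpa [he] using hxS _
      · rw [dif_neg (by simpa [Nat.odd_iff] using ho)]
        simp [Nat.even_iff, Nat.odd_iff.1 ho]
        exact hc3 _


lemma union_of_not_hasAlt' {X : Type*} {r : X → X → Prop} (hsto : IsStrictTotalOrder X r)
    {Kn : ℕ} {S : Set X} (h : ¬ HasAlt r S (2 * Kn + 1)) : UnionOfAtMostConvex r Kn S := by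
  classical
  letI := hsto
  letI : LinearOrder X := linearOrderOfSTO r
  have hr : (fun a b : X => a < b) = r := rfl
  rw [← hr] at h ⊢
  exact union_of_not_hasAlt h

lemma isClosed_coord {Y : Type*} {ι : Type*} [Finite ι] (p : ι → Y × Y)
    (Q : (ι → Bool) → Prop) :
    IsClosed {rb : Y → Y → Bool | Q fun i => rb (p i).1 (p i).2} := by
  have hc : Continuous fun (rb : Y → Y → Bool) => fun i => rb (p i).1 (p i).2 :=
    continuous_pi fun i => (continuous_apply (p i).2).comp (continuous_apply (p i).1)
  exact (isClosed_discrete {g : ι → Bool | Q g}).preimage hc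

lemma isClosed_STO {Y : Type*} :
    IsClosed {rb : Y → Y → Bool | IsStrictTotalOrder Y fun a b => rb a b = true} := by
  have heq : {rb : Y → Y → Bool | IsStrictTotalOrder Y fun a b => rb a b = true}
      = (⋂ a : Y, {rb : Y → Y → Bool | ¬ rb a a = true}) ∩
        ((⋂ a : Y, ⋂ b : Y, ⋂ c : Y,
          {rb : Y → Y → Bool | rb a b = true → rb b c = true → rb a c = true}) ∩
         (⋂ a : Y, ⋂ b : Y,
          {rb : Y → Y → Bool | rb a b = true ∨ a = b ∨ rb b a = true})) := by
    ext rb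
    simp only [Set.mem_setOf_eq, Set.mem_inter_iff, Set.mem_iInter]
    constructor
    · intro hs
      exact ⟨fun a => hs.irrefl a, fun a b c => fun h1 h2 => hs.trans a b c h1 h2,
        fun a b => if h1 : rb a b = true then Or.inl h1 else if h2 : rb b a = true then Or.inr (Or.inr h2) else Or.inr (Or.inl (hs.trichotomous a b h1 h2))⟩
    · rintro ⟨h1, h2, h3⟩
      exact { irrefl := h1, trans := h2, trichotomous := fun a b hab hba => ((h3 a b).resolve_left hab).resolve_right hba }
  rw [heq]
  refine IsClosed.inter (isClosed_iInter fun a => ?_)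
    (IsClosed.inter
      (isClosed_iInter fun a => isClosed_iInter fun b => isClosed_iInter fun c => ?_)
      (isClosed_iInter fun a => isClosed_iInter fun b => ?_))
  · exact isClosed_coord (ι := Unit) (fun _ => (a, a)) (fun g => ¬ g () = true)
  · exact isClosed_coord (ι := Fin 3) ![(a, b), (b, c), (a, c)]
      (fun g => g 0 = true → g 1 = true → g 2 = true)
  · exact isClosed_coord (ι := Fin 2) ![(a, b), (b, a)]
      (fun g => g 0 = true ∨ a = b ∨ g 1 = true)

lemma isClosed_notAlt {Y : Type*} (S : Set Y) (N : ℕ) :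
    IsClosed {rb : Y → Y → Bool | ¬ HasAlt (fun a b => rb a b = true) S N} := by
  have heq : {rb : Y → Y → Bool | ¬ HasAlt (fun a b => rb a b = true) S N}
      = ⋂ a : Fin N → Y, {rb : Y → Y → Bool |
          ¬ ((∀ i j : Fin N, i < j → rb (a i) (a j) = true) ∧
             ∀ i : Fin N, (a i ∈ S ↔ Even (i : ℕ)))} := by
    ext rb
    simp only [Set.mem_setOf_eq, Set.mem_iInter, HasAlt, not_exists]
  rw [heq]
  refine isClosed_iInter fun a => ?_
  exact isClosed_coord (ι := Fin N × Fin N) (fun ij => (a ij.1, a ij.2))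
    (fun g => ¬ ((∀ i j : Fin N, i < j → g (i, j) = true) ∧
       ∀ i : Fin N, (a i ∈ S ↔ Even (i : ℕ))))

theorem stmt_4 {L : Language} {M : Type*} [L.Structure M]
    (K : ((m : ℕ) × L.Formula (Unit ⊕ Fin m)) → ℕ)
    (h : ∀ (n : ℕ) (φ : Fin n → (m : ℕ) × L.Formula (Unit ⊕ Fin m))
        (b : (i : Fin n) → Fin (φ i).1 → M),
        ∃ r : M → M → Prop, IsStrictTotalOrder M r ∧
          ∀ i : Fin n, UnionOfAtMostConvex r (K (φ i)) (realizeSet L M (φ i).2 (b i))) :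
    ConvexlyOrderable L M := by
  classical
  set ι := (m : ℕ) × L.Formula (Unit ⊕ Fin m) × (Fin m → M) with hι
  set Z : ι → Set (M → M → Bool) := fun inst =>
    {rb | IsStrictTotalOrder M fun a b => rb a b = true} ∩
    {rb | ¬ HasAlt (fun a b => rb a b = true) (realizeSet L M inst.2.1 inst.2.2)
        (2 * K ⟨inst.1, inst.2.1⟩ + 1)} with hZ
  have hZc : ∀ inst, IsClosed (Z inst) := fun inst =>
    isClosed_STO.inter (isClosed_notAlt _ _)
  have hne : (Set.univ ∩ ⋂ inst, Z inst).Nonempty := by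
    by_contra hempty
    rw [Set.not_nonempty_iff_eq_empty] at hempty
    obtain ⟨u, hu⟩ := isCompact_univ.elim_finite_subfamily_closed Z hZc hempty
    set e := u.equivFin with he
    obtain ⟨r, hsto, hconv⟩ := h u.card
      (fun i => ⟨((e.symm i : ι)).1, ((e.symm i : ι)).2.1⟩)
      (fun i => ((e.symm i : ι)).2.2)
    haveI : DecidableRel r := fun a b => Classical.dec _
    set rb : M → M → Bool := fun a b => decide (r a b) with hrb
    have hrel : (fun a b => rb a b = true) = r := by
      funext a b; simp [hrb]
    have hmem : rb ∈ Set.univ ∩ ⋂ inst ∈ u, Z inst := by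
      refine ⟨trivial, ?_⟩
      simp only [Set.mem_iInter]
      intro inst hinst
      have key : (e.symm (e ⟨inst, hinst⟩) : ι) = inst := by
        rw [Equiv.symm_apply_apply]
      constructor
      · show IsStrictTotalOrder M fun a b => rb a b = true
        rw [hrel]; exact hsto
      · show ¬ HasAlt (fun a b => rb a b = true) _ _
        rw [hrel]
        have := hconv (e ⟨inst, hinst⟩)
        rw [key] at this
        exact not_hasAlt_of_union this
    rw [hu] at hmem
    exact hmem
  obtain ⟨rb, -, hrb⟩ := hne
  rw [Set.mem_iInter] at hrb
  refine ⟨fun a b => rb a b = true, (hrb ⟨0, ⊤, finZeroElim⟩).1, ?_⟩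
  intro m φ
  refine ⟨K ⟨m, φ⟩, fun b => ?_⟩
  exact union_of_not_hasAlt' (hrb ⟨m, φ, b⟩).1 (hrb ⟨m, φ, b⟩).2
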